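/- Fix a ∈ (0, 1/2), p ∈ ℕ with p ≥ 1, and λ ∈ {0, 1, 2}. Define R_λ(p, m, x) = Σ_{j=0}^{m−1} j^λ cos((2pj+1)x) and S_λ(p, m, x) = Σ_{j=0}^{m−1} j^λ sin((2pj+1)x). Then there exists C > 0 such that for all m ∈ ℕ with m ≥ 1 and all x ∈ [m^{−a}, π/p − m^{−a}], one has |R_λ(p, m, x)| ≤ C m^{λ+a} and |S_λ(p, m, x)| ≤ C m^{λ+a}. -/

import Mathlib

open Real Set

/-- Abel summation bound: if all partial sums of `f` are bounded by `B`, then the sum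
weighted by `j^lam` is bounded by `2 * m^lam * B`. -/
private lemma abel_bound (f : ℕ → ℂ) (B : ℝ) (lam m : ℕ)
    (hG : ∀ k, ‖∑ j ∈ Finset.range k, f j‖ ≤ B) :
    ‖∑ j ∈ Finset.range m, (j : ℂ) ^ lam * f j‖ ≤ 2 * (m : ℝ) ^ lam * B := by
  have hB : 0 ≤ B := le_trans (norm_nonneg _) (hG 0)
  rcases Nat.eq_zero_or_pos m with hm | hm
  · simp [hm]
    positivity
  have key := Finset.sum_range_by_parts (fun j => (j : ℂ) ^ lam) f m
  simp only [smul_eq_mul] at key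
  rw [key]
  have hcast : ((m - 1 : ℕ) : ℝ) ≤ (m : ℝ) := by exact_mod_cast Nat.sub_le m 1
  have h1 : ‖((m - 1 : ℕ) : ℂ) ^ lam * ∑ j ∈ Finset.range m, f j‖ ≤ (m : ℝ) ^ lam * B := by
    rw [norm_mul, norm_pow, Complex.norm_natCast]
    exact mul_le_mul (pow_le_pow_left₀ (by positivity) hcast lam) (hG m) (norm_nonneg _)
      (by positivity)
  have h2 : ‖∑ i ∈ Finset.range (m - 1),
      (((i + 1 : ℕ) : ℂ) ^ lam - (i : ℂ) ^ lam) * ∑ j ∈ Finset.range (i + 1), f j‖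
      ≤ (m : ℝ) ^ lam * B := by
    calc ‖∑ i ∈ Finset.range (m - 1),
        (((i + 1 : ℕ) : ℂ) ^ lam - (i : ℂ) ^ lam) * ∑ j ∈ Finset.range (i + 1), f j‖
        ≤ ∑ i ∈ Finset.range (m - 1),
          ‖(((i + 1 : ℕ) : ℂ) ^ lam - (i : ℂ) ^ lam) * ∑ j ∈ Finset.range (i + 1), f j‖ :=
          norm_sum_le _ _
      _ ≤ ∑ i ∈ Finset.range (m - 1),
          ((((i + 1 : ℕ) : ℝ) ^ lam - ((i : ℕ) : ℝ) ^ lam) * B) := by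
          refine Finset.sum_le_sum fun i _ => ?_
          rw [norm_mul]
          have hdiff : (((i + 1 : ℕ) : ℂ) ^ lam - (i : ℂ) ^ lam)
              = (((((i + 1 : ℕ) : ℝ) ^ lam - ((i : ℕ) : ℝ) ^ lam) : ℝ) : ℂ) := by
            push_cast; ring
          have hmono : ((i : ℕ) : ℝ) ^ lam ≤ (((i + 1 : ℕ)) : ℝ) ^ lam := by
            apply pow_le_pow_left₀ (by positivity)
            exact_mod_cast Nat.le_succ i
          rw [hdiff, Complex.norm_real, Real.norm_eq_abs, abs_of_nonneg (by linarith)]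
          exact mul_le_mul_of_nonneg_left (hG (i + 1)) (by linarith)
      _ = (((m - 1 : ℕ) : ℝ) ^ lam - ((0 : ℕ) : ℝ) ^ lam) * B := by
          rw [← Finset.sum_mul, Finset.sum_range_sub (fun i => ((i : ℕ) : ℝ) ^ lam)]
      _ ≤ (m : ℝ) ^ lam * B := by
          apply mul_le_mul_of_nonneg_right _ hB
          have : (0 : ℝ) ≤ ((0 : ℕ) : ℝ) ^ lam := by positivity
          have := pow_le_pow_left₀ (by positivity : (0:ℝ) ≤ ((m - 1 : ℕ) : ℝ)) hcast lam
          linarith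
  calc ‖_ - _‖ ≤ ‖((m - 1 : ℕ) : ℂ) ^ lam * ∑ j ∈ Finset.range m, f j‖ +
        ‖∑ i ∈ Finset.range (m - 1),
          (((i + 1 : ℕ) : ℂ) ^ lam - (i : ℂ) ^ lam) * ∑ j ∈ Finset.range (i + 1), f j‖ :=
        norm_sub_le _ _
    _ ≤ (m : ℝ) ^ lam * B + (m : ℝ) ^ lam * B := add_le_add h1 h2
    _ = 2 * (m : ℝ) ^ lam * B := by ring

/-- Geometric sum bound for the exponential sums. -/
private lemma geo_bound (p : ℕ) (x : ℝ) (hs : 0 < Real.sin ((p : ℝ) * x)) (k : ℕ) :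
    ‖∑ j ∈ Finset.range k,
      Complex.exp ((((2 * (p : ℝ) * (j : ℝ) + 1) * x : ℝ)) * Complex.I)‖
      ≤ 1 / Real.sin ((p : ℝ) * x) := by
  set s := Real.sin ((p : ℝ) * x) with hs_def
  set z := Complex.exp (((2 * (p : ℝ) * x : ℝ)) * Complex.I) with hz_def
  have habs_sq : ‖z - 1‖ ^ 2 = (2 * s) ^ 2 := by
    rw [Complex.sq_norm, Complex.normSq_apply, Complex.sub_re,
      Complex.sub_im, Complex.one_re, Complex.one_im, hz_def,
      Complex.exp_ofReal_mul_I_re, Complex.exp_ofReal_mul_I_im]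
    have A := Real.sin_sq_add_cos_sq (2 * (p : ℝ) * x)
    have B := Real.cos_two_mul ((p : ℝ) * x)
    have C := Real.sin_sq_add_cos_sq ((p : ℝ) * x)
    have hB' : Real.cos (2 * (p : ℝ) * x) = 2 * Real.cos ((p : ℝ) * x) ^ 2 - 1 := by
      rw [show 2 * (p : ℝ) * x = 2 * ((p : ℝ) * x) by ring]; exact B
    nlinarith [A, hB', C]
  have habs : ‖z - 1‖ = 2 * s := by
    have h1 : ‖z - 1‖ = Real.sqrt (‖z - 1‖ ^ 2) := (Real.sqrt_sq (norm_nonneg _)).symm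
    rw [h1, habs_sq, Real.sqrt_sq (by linarith)]
  have hz1 : z ≠ 1 := by
    intro h
    rw [h] at habs
    simp at habs
    linarith
  have hterm : ∀ j : ℕ,
      Complex.exp ((((2 * (p : ℝ) * (j : ℝ) + 1) * x : ℝ)) * Complex.I)
      = Complex.exp ((x : ℝ) * Complex.I) * z ^ j := by
    intro j
    rw [hz_def, ← Complex.exp_nat_mul, ← Complex.exp_add]
    congr 1
    push_cast
    ring
  calc ‖∑ j ∈ Finset.range k,
        Complex.exp ((((2 * (p : ℝ) * (j : ℝ) + 1) * x : ℝ)) * Complex.I)‖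
      = ‖Complex.exp ((x : ℝ) * Complex.I) * ∑ j ∈ Finset.range k, z ^ j‖ := by
        rw [Finset.mul_sum]
        congr 1
        exact Finset.sum_congr rfl fun j _ => hterm j
    _ = ‖∑ j ∈ Finset.range k, z ^ j‖ := by
        rw [norm_mul, Complex.norm_exp_ofReal_mul_I, one_mul]
    _ = ‖(z ^ k - 1) / (z - 1)‖ := by rw [geom_sum_eq hz1]
    _ = ‖z ^ k - 1‖ / ‖z - 1‖ := norm_div _ _
    _ ≤ 2 / (2 * s) := by
        apply div_le_div₀ (by norm_num) _ (by linarith) habs.ge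
        calc ‖z ^ k - 1‖ ≤ ‖z ^ k‖ + ‖(1 : ℂ)‖ := norm_sub_le _ _
          _ = ‖z‖ ^ k + 1 := by rw [norm_pow, norm_one]
          _ = 1 + 1 := by
              rw [hz_def, Complex.norm_exp_ofReal_mul_I, one_pow]
          _ = 2 := by norm_num
    _ = 1 / s := by field_simp
/-- Bounds `|R_λ(p,m,x)| ≤ C m^(λ+a)` and `|S_λ(p,m,x)| ≤ C m^(λ+a)` for the sums
`R_λ(p,m,x) = Σ_{j<m} j^λ cos((2pj+1)x)`, `S_λ(p,m,x) = Σ_{j<m} j^λ sin((2pj+1)x)`,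
uniformly for `x ∈ [m^(-a), π/p - m^(-a)]`. -/
theorem trig_sum_bounds_R_S
    (ν : ℝ) (hν : ν ∈ Set.Ioo (0 : ℝ) (1 / 2)) (p : ℕ) (hp : 1 ≤ p)
    (lam : ℕ) (hlam : lam ≤ 2) :
    ∃ C > 0, ∀ m : ℕ, 1 ≤ m →
      ∀ x ∈ Set.Icc ((m : ℝ) ^ (-ν)) (π / p - (m : ℝ) ^ (-ν)),
        |∑ j ∈ Finset.range m, (j : ℝ) ^ lam * Real.cos ((2 * p * j + 1) * x)|
            ≤ C * (m : ℝ) ^ ((lam : ℝ) + ν) ∧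
        |∑ j ∈ Finset.range m, (j : ℝ) ^ lam * Real.sin ((2 * p * j + 1) * x)|
            ≤ C * (m : ℝ) ^ ((lam : ℝ) + ν) := by
  obtain ⟨hν0, hν2⟩ := hν
  refine ⟨π, Real.pi_pos, ?_⟩
  intro m hm x hx
  obtain ⟨hx1, hx2⟩ := hx
  have hm0 : (0 : ℝ) < m := by exact_mod_cast hm
  set t : ℝ := (m : ℝ) ^ (-ν) with ht_def
  have ht0 : 0 < t := Real.rpow_pos_of_pos hm0 _
  have ht1 : t ≤ 1 := Real.rpow_le_one_of_one_le_of_nonpos (by exact_mod_cast hm) (by linarith)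
  have hp0 : (0 : ℝ) < p := by exact_mod_cast hp
  have hp1 : (1 : ℝ) ≤ p := by exact_mod_cast hp
  have hx0 : 0 < x := lt_of_lt_of_le ht0 hx1
  -- bounds on p * x
  have hy1 : t ≤ (p : ℝ) * x := le_trans hx1 (le_mul_of_one_le_left hx0.le hp1)
  have hy2 : (p : ℝ) * x ≤ π - t := by
    have h : (p : ℝ) * x ≤ (p : ℝ) * (π / p - t) :=
      mul_le_mul_of_nonneg_left hx2 hp0.le
    have h2 : (p : ℝ) * (π / p - t) = π - (p : ℝ) * t := by field_simp
    have h3 : t ≤ (p : ℝ) * t := le_mul_of_one_le_left ht0.le hp1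
    linarith [h, h2 ▸ h]
  -- Jordan inequality lower bound for sin (p x)
  have htpi : t ≤ π / 2 := by
    have := Real.pi_gt_three
    linarith
  have hsin : 2 / π * t ≤ Real.sin ((p : ℝ) * x) := by
    rcases le_or_gt ((p : ℝ) * x) (π / 2) with hc | hc
    · calc 2 / π * t ≤ 2 / π * ((p : ℝ) * x) := by
            apply mul_le_mul_of_nonneg_left hy1
            positivity
        _ ≤ Real.sin ((p : ℝ) * x) := Real.mul_le_sin (by linarith) hc
    · have h1 : Real.sin ((p : ℝ) * x) = Real.sin (π - (p : ℝ) * x) :=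
        (Real.sin_pi_sub _).symm
      rw [h1]
      calc 2 / π * t ≤ 2 / π * (π - (p : ℝ) * x) := by
            apply mul_le_mul_of_nonneg_left (by linarith)
            positivity
        _ ≤ Real.sin (π - (p : ℝ) * x) := Real.mul_le_sin (by linarith) (by linarith)
  have hsin0 : 0 < Real.sin ((p : ℝ) * x) := by
    have : 0 < 2 / π * t := by positivity
    linarith
  -- the complex sum
  set E : ℂ := ∑ j ∈ Finset.range m,
    (j : ℂ) ^ lam * Complex.exp ((((2 * (p : ℝ) * (j : ℝ) + 1) * x : ℝ)) * Complex.I)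
    with hE_def
  have hEnorm : ‖E‖ ≤ 2 * (m : ℝ) ^ lam * (1 / Real.sin ((p : ℝ) * x)) :=
    abel_bound _ _ lam m (geo_bound p x hsin0)
  -- 1 / sin ≤ (π/2) * m^ν
  have hmν : t * (m : ℝ) ^ ν = 1 := by
    rw [ht_def, ← Real.rpow_add hm0]
    simp
  have hinv : 1 / Real.sin ((p : ℝ) * x) ≤ π / 2 * (m : ℝ) ^ ν := by
    rw [div_le_iff₀ hsin0]
    have hmν0 : (0 : ℝ) < (m : ℝ) ^ ν := Real.rpow_pos_of_pos hm0 _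
    have key : 2 / π * t * (π / 2 * (m : ℝ) ^ ν) = 1 := by
      have hπ : (π : ℝ) ≠ 0 := Real.pi_ne_zero
      have h : 2 / π * t * (π / 2 * (m : ℝ) ^ ν) = t * (m : ℝ) ^ ν := by
        field_simp
      rw [h, hmν]
    calc (1 : ℝ) = 2 / π * t * (π / 2 * (m : ℝ) ^ ν) := key.symm
      _ ≤ Real.sin ((p : ℝ) * x) * (π / 2 * (m : ℝ) ^ ν) := by
          apply mul_le_mul_of_nonneg_right hsin
          positivity
      _ = π / 2 * (m : ℝ) ^ ν * Real.sin ((p : ℝ) * x) := by ring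
  have hfinal : 2 * (m : ℝ) ^ lam * (1 / Real.sin ((p : ℝ) * x)) ≤ π * (m : ℝ) ^ ((lam : ℝ) + ν) := by
    have hsplit : (m : ℝ) ^ ((lam : ℝ) + ν) = (m : ℝ) ^ lam * (m : ℝ) ^ ν := by
      rw [Real.rpow_add hm0, Real.rpow_natCast]
    calc 2 * (m : ℝ) ^ lam * (1 / Real.sin ((p : ℝ) * x))
        ≤ 2 * (m : ℝ) ^ lam * (π / 2 * (m : ℝ) ^ ν) := by
          apply mul_le_mul_of_nonneg_left hinv
          positivity
      _ = π * ((m : ℝ) ^ lam * (m : ℝ) ^ ν) := by ring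
      _ = π * (m : ℝ) ^ ((lam : ℝ) + ν) := by rw [hsplit]
  have hEbound : ‖E‖ ≤ π * (m : ℝ) ^ ((lam : ℝ) + ν) := le_trans hEnorm hfinal
  -- identify real and imaginary parts
  have hre : E.re = ∑ j ∈ Finset.range m, (j : ℝ) ^ lam * Real.cos ((2 * p * j + 1) * x) := by
    rw [hE_def, Complex.re_sum]
    refine Finset.sum_congr rfl fun j _ => ?_
    have h1 : ((j : ℂ) ^ lam) = (((j : ℝ) ^ lam : ℝ) : ℂ) := by push_cast; ring
    rw [h1, Complex.re_ofReal_mul, Complex.exp_ofReal_mul_I_re]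
  have him : E.im = ∑ j ∈ Finset.range m, (j : ℝ) ^ lam * Real.sin ((2 * p * j + 1) * x) := by
    rw [hE_def, Complex.im_sum]
    refine Finset.sum_congr rfl fun j _ => ?_
    have h1 : ((j : ℂ) ^ lam) = (((j : ℝ) ^ lam : ℝ) : ℂ) := by push_cast; ring
    rw [h1, Complex.im_ofReal_mul, Complex.exp_ofReal_mul_I_im]
  constructor
  · rw [← hre]
    exact le_trans (Complex.abs_re_le_norm E) hEbound
  · rw [← him]
    exact le_trans (Complex.abs_im_le_norm E) hEbound
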